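/- Let 𝔽_q be a finite field, χ : 𝔽_q → ℂ a nontrivial additive character, P ∈ 𝔽_q[x₁,x₂,x₃] a nonzero homogeneous polynomial of degree k ≥ 1, and H = {x ∈ 𝔽_q³ : P(x) = 0}. Assume H contains no plane through the origin and |H| ≥ c·q² for some c > 0. Then for every m ∈ 𝔽_q³ ∖ {0}, the inverse Fourier transform of the normalized surface measure dσ on H satisfies |(dσ)^∨(m)| = ||H|^{−1} Σ_{x∈H} χ(m·x)| ≤ k/(c(q − 1)) ≲ q^{−1}. -/

import Mathlib

open Polynomial Finset
set_option linter.unusedSectionVars false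
set_option linter.unusedVariables false
set_option maxHeartbeats 1000000

section AuxStmt3
variable {F : Type} [Field F] [Fintype F] [DecidableEq F]

lemma stmt3_coeff_prod_sum {ι : Type*} (s : Finset ι) (f : ι → F[X]) (n : ι → ℕ)
    (h : ∀ i ∈ s, (f i).natDegree ≤ n i) :
    (∏ i ∈ s, f i).coeff (∑ i ∈ s, n i) = ∏ i ∈ s, (f i).coeff (n i) := by
  classical
  induction s using Finset.induction with
  | empty => simp
  | @insert a s ha ih =>
    rw [Finset.prod_insert ha, Finset.sum_insert ha,
      Polynomial.coeff_mul_add_eq_of_natDegree_le (h _ (Finset.mem_insert_self _ _))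
        ((Polynomial.natDegree_prod_le _ _).trans
          (Finset.sum_le_sum fun i hi => h i (Finset.mem_insert_of_mem hi))),
      ih (fun i hi => h i (Finset.mem_insert_of_mem hi)), Finset.prod_insert ha]

lemma stmt3_support_deg_sum {k : ℕ} {P : MvPolynomial (Fin 3) F} (hhom : P.IsHomogeneous k)
    {d : Fin 3 →₀ ℕ} (hd : d ∈ P.support) : ∑ i ∈ d.support, d i = k := by
  have := hhom (MvPolynomial.mem_support_iff.mp hd)
  simpa [Finsupp.weight_apply, Finsupp.sum] using this

lemma stmt3_lin_natDegree_le (a b : F) :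
    (Polynomial.C a + Polynomial.C b * Polynomial.X).natDegree ≤ 1 := by
  compute_degree

lemma stmt3_lin_coeff_one (a b : F) :
    (Polynomial.C a + Polynomial.C b * Polynomial.X).coeff 1 = b := by
  simp

lemma eval_smul_hom (P : MvPolynomial (Fin 3) F) {k : ℕ} (hhom : P.IsHomogeneous k)
    (t : F) (x : Fin 3 → F) :
    MvPolynomial.eval (fun i => t * x i) P = t ^ k * MvPolynomial.eval x P := by
  rw [MvPolynomial.eval_eq, MvPolynomial.eval_eq, Finset.mul_sum]
  apply Finset.sum_congr rfl
  intro d hd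
  rw [← stmt3_support_deg_sum hhom hd]
  simp_rw [mul_pow]
  rw [Finset.prod_mul_distrib, Finset.prod_pow_eq_pow_sum]
  ring

noncomputable def linePoly (P : MvPolynomial (Fin 3) F) (a b : Fin 3 → F) : F[X] :=
  MvPolynomial.aeval (fun i => Polynomial.C (a i) + Polynomial.C (b i) * Polynomial.X) P

lemma linePoly_eval (P : MvPolynomial (Fin 3) F) (a b : Fin 3 → F) (s : F) :
    (linePoly P a b).eval s = MvPolynomial.eval (fun i => a i + b i * s) P := by
  have h := MvPolynomial.comp_aeval_apply
    (f := fun i => Polynomial.C (a i) + Polynomial.C (b i) * Polynomial.X)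
    (Polynomial.aeval s : F[X] →ₐ[F] F) P
  simp only [map_add, map_mul, Polynomial.aeval_C, Polynomial.aeval_X,
    Algebra.algebraMap_self, map_id, RingHom.id_apply, Polynomial.coe_aeval_eq_eval,
    Algebra.algebraMap_self_apply] at h
  rw [linePoly, h]
  have : (MvPolynomial.aeval (R := F) (fun i => a i + b i * s)) P
      = (MvPolynomial.eval fun i => a i + b i * s) P := by
    rw [← MvPolynomial.coe_aeval_eq_eval]; rfl
  simpa using this

lemma linePoly_decomp (P : MvPolynomial (Fin 3) F) (a b : Fin 3 → F) :
    linePoly P a b = ∑ d ∈ P.support, Polynomial.C (MvPolynomial.coeff d P) *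
      ∏ i ∈ d.support, (Polynomial.C (a i) + Polynomial.C (b i) * Polynomial.X) ^ (d i) := by
  conv_lhs => rw [linePoly, ← MvPolynomial.support_sum_monomial_coeff P]
  rw [map_sum]
  apply Finset.sum_congr rfl
  intro d _
  rw [MvPolynomial.aeval_monomial]
  rfl

lemma linePoly_natDegree_le {k : ℕ} (P : MvPolynomial (Fin 3) F) (hhom : P.IsHomogeneous k)
    (a b : Fin 3 → F) : (linePoly P a b).natDegree ≤ k := by
  rw [linePoly_decomp]
  apply (Polynomial.natDegree_sum_le _ _).trans
  refine (Finset.fold_max_le k).mpr ⟨Nat.zero_le _, ?_⟩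
  intro d hd
  apply (Polynomial.natDegree_mul_le).trans
  rw [Polynomial.natDegree_C, zero_add]
  apply (Polynomial.natDegree_prod_le _ _).trans
  calc ∑ i ∈ d.support, ((Polynomial.C (a i) + Polynomial.C (b i) * Polynomial.X) ^ d i).natDegree
      ≤ ∑ i ∈ d.support, d i := by
        apply Finset.sum_le_sum
        intro i _
        apply Polynomial.natDegree_pow_le.trans
        calc d i * (Polynomial.C (a i) + Polynomial.C (b i) * Polynomial.X).natDegree
            ≤ d i * 1 := Nat.mul_le_mul_left _ (stmt3_lin_natDegree_le _ _)
          _ = d i := Nat.mul_one _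
    _ = k := stmt3_support_deg_sum hhom hd

lemma linePoly_coeff_top {k : ℕ} (P : MvPolynomial (Fin 3) F) (hhom : P.IsHomogeneous k)
    (a b : Fin 3 → F) : (linePoly P a b).coeff k = MvPolynomial.eval b P := by
  rw [linePoly_decomp, Polynomial.finset_sum_coeff, MvPolynomial.eval_eq]
  apply Finset.sum_congr rfl
  intro d hd
  rw [Polynomial.coeff_C_mul]
  congr 1
  rw [← stmt3_support_deg_sum hhom hd,
    stmt3_coeff_prod_sum _ _ _ (fun i _ => Polynomial.natDegree_pow_le.trans (by
      calc d i * (Polynomial.C (a i) + Polynomial.C (b i) * Polynomial.X).natDegree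
          ≤ d i * 1 := Nat.mul_le_mul_left _ (stmt3_lin_natDegree_le _ _)
        _ = d i := Nat.mul_one _))]
  apply Finset.prod_congr rfl
  intro i _
  have h := Polynomial.coeff_pow_of_natDegree_le
    (p := Polynomial.C (a i) + Polynomial.C (b i) * Polynomial.X)
    (n := 1) (m := d i) (stmt3_lin_natDegree_le _ _)
  rw [mul_one] at h
  rw [h, stmt3_lin_coeff_one]

lemma exists_basis_pair (m : Fin 3 → F) (hm : m ≠ 0) (a : Fin 3 → F)
    (ha0 : a ≠ 0) (ham : ∑ i, m i * a i = 0) :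
    ∃ b : Fin 3 → F, (∑ i, m i * b i = 0) ∧
      ∀ x : Fin 3 → F, (∑ i, m i * x i = 0) → ∃ α β : F, α • a + β • b = x := by
  classical
  set φ : (Fin 3 → F) →ₗ[F] F :=
    { toFun := fun x => ∑ i, m i * x i
      map_add' := by intro x y; simp [mul_add, Finset.sum_add_distrib]
      map_smul' := by intro t x; simp [Finset.mul_sum, mul_left_comm] } with hφ
  have hφ_apply : ∀ x, φ x = ∑ i, m i * x i := fun _ => rfl
  obtain ⟨j, hj⟩ : ∃ j, m j ≠ 0 := by
    by_contra h
    push_neg at h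
    exact hm (funext h)
  have hsurj : Function.Surjective φ := by
    intro y
    refine ⟨Pi.single j (y / m j), ?_⟩
    rw [hφ_apply]
    rw [Finset.sum_eq_single j]
    · rw [Pi.single_eq_same]; field_simp
    · intro i _ hi; simp [Pi.single_apply, hi]
    · simp
  have hrange : LinearMap.range φ = ⊤ := LinearMap.range_eq_top.mpr hsurj
  have hker : Module.finrank F (LinearMap.ker φ) = 2 := by
    have h1 := LinearMap.finrank_range_add_finrank_ker φ
    rw [hrange] at h1
    rw [finrank_top, Module.finrank_self] at h1
    have h2 : Module.finrank F (Fin 3 → F) = 3 := by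
      simp [Module.finrank_pi]
    omega
  have haker : a ∈ LinearMap.ker φ := by rw [LinearMap.mem_ker, hφ_apply]; exact ham
  have hnotle : ¬ (LinearMap.ker φ ≤ Submodule.span F {a}) := by
    intro hle
    have := Submodule.finrank_mono (R := F) hle
    rw [hker, finrank_span_singleton ha0] at this
    omega
  obtain ⟨b, hbker, hbspan⟩ : ∃ b, b ∈ LinearMap.ker φ ∧ b ∉ Submodule.span F {a} := by
    by_contra h
    push_neg at h
    exact hnotle h
  have hb0 : b ≠ 0 := fun h => hbspan (h ▸ Submodule.zero_mem _)
  have hli : LinearIndependent F ![a, b] := by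
    rw [LinearIndependent.pair_iff]
    intro s t hst
    by_cases ht : t = 0
    · subst ht
      rw [zero_smul, add_zero] at hst
      rcases smul_eq_zero.mp hst with h | h
      · exact ⟨h, rfl⟩
      · exact absurd h ha0
    · exfalso
      apply hbspan
      rw [Submodule.mem_span_singleton]
      refine ⟨-s/t, ?_⟩
      have h1 : t • b = (-s) • a := by
        rw [neg_smul]
        exact eq_neg_of_add_eq_zero_right hst
      have h2 := congrArg (fun v => t⁻¹ • v) h1
      simp only [smul_smul, inv_mul_cancel₀ ht, one_smul] at h2
      rw [h2]
      congr 1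
      field_simp
  have hspan : Submodule.span F {a, b} = LinearMap.ker φ := by
    apply Submodule.eq_of_le_of_finrank_le
    · rw [Submodule.span_le, Set.insert_subset_iff, Set.singleton_subset_iff]
      exact ⟨haker, hbker⟩
    · rw [hker]
      have h4 := finrank_span_eq_card hli
      have h5 : Set.range ![a, b] = {a, b} := by
        ext x
        simp [Fin.exists_fin_two, or_comm]
      rw [h5] at h4
      rw [h4]
      simp
  refine ⟨b, hbker, ?_⟩
  intro x hx
  have hxker : x ∈ LinearMap.ker φ := by rw [LinearMap.mem_ker, hφ_apply]; exact hx
  rw [← hspan] at hxker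
  exact Submodule.mem_span_pair.mp hxker

lemma linePoly_ne_zero {k : ℕ} (P : MvPolynomial (Fin 3) F) (hhom : P.IsHomogeneous k)
    (a b : Fin 3 → F) (ha : MvPolynomial.eval a P ≠ 0) : linePoly P a b ≠ 0 := by
  intro h
  apply ha
  have := linePoly_eval P a b 0
  rw [h] at this
  simp only [Polynomial.eval_zero] at this
  rw [this]
  congr 2
  funext i
  ring

lemma zero_dirs_card {k : ℕ} (hk : 1 ≤ k) (P : MvPolynomial (Fin 3) F)
    (hhom : P.IsHomogeneous k) (a b : Fin 3 → F) (ha : MvPolynomial.eval a P ≠ 0) :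
    ((insert b ((univ : Finset F).image (fun s => fun i => a i + b i * s))).filter
      (fun d => MvPolynomial.eval d P = 0)).card ≤ k := by
  classical
  set g := linePoly P a b with hg
  have hgne : g ≠ 0 := linePoly_ne_zero P hhom a b ha
  have hroots : g.roots.toFinset.card ≤ g.natDegree :=
    (Multiset.toFinset_card_le _).trans (Polynomial.card_roots' g)
  have himg : ∀ d ∈ ((univ : Finset F).image (fun s => fun i => a i + b i * s)).filter
      (fun d => MvPolynomial.eval d P = 0),
      d ∈ g.roots.toFinset.image (fun s => fun i => a i + b i * s) := by
    intro d hd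
    rw [Finset.mem_filter, Finset.mem_image] at hd
    obtain ⟨⟨s, _, rfl⟩, hval⟩ := hd
    refine Finset.mem_image.mpr ⟨s, ?_, rfl⟩
    rw [Multiset.mem_toFinset, Polynomial.mem_roots hgne]
    rw [Polynomial.IsRoot, linePoly_eval]
    exact hval
  by_cases hb : MvPolynomial.eval b P = 0
  · have hdeg : g.natDegree ≤ k - 1 := by
      have h1 : g.natDegree ≤ k := linePoly_natDegree_le P hhom a b
      have h2 : g.coeff k = 0 := by rw [linePoly_coeff_top P hhom a b, hb]
      have h3 : g.natDegree ≠ k := by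
        intro h
        apply hgne
        apply Polynomial.leadingCoeff_eq_zero.mp
        rw [Polynomial.leadingCoeff, h]
        exact h2
      omega
    calc _ ≤ (insert b (g.roots.toFinset.image (fun s => fun i => a i + b i * s))).card := by
          apply Finset.card_le_card
          intro d hd
          rw [Finset.filter_insert] at hd
          by_cases hdb : d = b
          · subst hdb; exact Finset.mem_insert_self _ _
          · apply Finset.mem_insert_of_mem
            apply himg
            rw [if_pos hb] at hd
            rcases Finset.mem_insert.mp hd with h | h
            · exact absurd h hdb
            · exact h
      _ ≤ 1 + (g.roots.toFinset.image (fun s => fun i => a i + b i * s)).card := by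
          apply (Finset.card_insert_le _ _).trans; omega
      _ ≤ 1 + (k - 1) := by
          gcongr
          exact (Finset.card_image_le.trans (hroots.trans hdeg))
      _ = k := by omega
  · calc _ ≤ (g.roots.toFinset.image (fun s => fun i => a i + b i * s)).card := by
          apply Finset.card_le_card
          intro d hd
          rw [Finset.filter_insert, if_neg hb] at hd
          exact himg d hd
      _ ≤ k := Finset.card_image_le.trans (hroots.trans (linePoly_natDegree_le P hhom a b))

lemma plane_count {k : ℕ} (hk : 1 ≤ k) (P : MvPolynomial (Fin 3) F) (hhom : P.IsHomogeneous k)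
    (a b : Fin 3 → F) (ha : MvPolynomial.eval a P ≠ 0)
    (S : Finset (Fin 3 → F))
    (hS : ∀ x ∈ S, MvPolynomial.eval x P = 0 ∧ ∃ α β : F, α • a + β • b = x) :
    S.card ≤ 1 + k * (Fintype.card F - 1) := by
  classical
  set D : Finset (Fin 3 → F) :=
    insert b ((univ : Finset F).image (fun s => fun i => a i + b i * s)) with hD
  set ZD := D.filter (fun d => MvPolynomial.eval d P = 0) with hZD
  have hsub : S ⊆ insert 0 (ZD.biUnion fun d =>
      ((univ : Finset F).erase 0).image (fun t => t • d)) := by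
    intro x hx
    obtain ⟨hval, α, β, hrep⟩ := hS x hx
    by_cases hx0 : x = 0
    · exact Finset.mem_insert.mpr (Or.inl hx0)
    apply Finset.mem_insert_of_mem
    by_cases hα : α = 0
    · subst hα
      rw [zero_smul, zero_add] at hrep
      have hβ : β ≠ 0 := by rintro rfl; rw [zero_smul] at hrep; exact hx0 hrep.symm
      have hfun : x = fun i => β * b i := by rw [← hrep]; funext i; simp
      have hbz : MvPolynomial.eval b P = 0 := by
        have := hval
        rw [hfun, eval_smul_hom P hhom] at this
        exact (mul_eq_zero.mp this).resolve_left (pow_ne_zero _ hβ)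
      apply Finset.mem_biUnion.mpr
      refine ⟨b, Finset.mem_filter.mpr ⟨Finset.mem_insert_self _ _, hbz⟩, ?_⟩
      exact Finset.mem_image.mpr ⟨β, Finset.mem_erase.mpr ⟨hβ, Finset.mem_univ _⟩, hrep⟩
    · set d : Fin 3 → F := fun i => a i + b i * (β / α) with hd
      have hxd : x = fun i => α * d i := by
        rw [← hrep]; funext i; simp [hd]; field_simp
      have hdz : MvPolynomial.eval d P = 0 := by
        have := hval
        rw [hxd, eval_smul_hom P hhom] at this
        exact (mul_eq_zero.mp this).resolve_left (pow_ne_zero _ hα)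
      apply Finset.mem_biUnion.mpr
      refine ⟨d, Finset.mem_filter.mpr ⟨?_, hdz⟩, ?_⟩
      · exact Finset.mem_insert_of_mem (Finset.mem_image.mpr ⟨β / α, Finset.mem_univ _, rfl⟩)
      · refine Finset.mem_image.mpr ⟨α, Finset.mem_erase.mpr ⟨hα, Finset.mem_univ _⟩, ?_⟩
        funext i
        rw [hxd]
        simp
  calc S.card ≤ (insert 0 (ZD.biUnion fun d =>
        ((univ : Finset F).erase 0).image (fun t => t • d))).card := Finset.card_le_card hsub
    _ ≤ 1 + (ZD.biUnion fun d =>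
        ((univ : Finset F).erase 0).image (fun t => t • d)).card := by
        apply (Finset.card_insert_le _ _).trans; omega
    _ ≤ 1 + ∑ d ∈ ZD, (((univ : Finset F).erase 0).image (fun t => t • d)).card := by
        gcongr
        exact Finset.card_biUnion_le
    _ ≤ 1 + ∑ _d ∈ ZD, (Fintype.card F - 1) := by
        gcongr with d hd
        apply Finset.card_image_le.trans
        rw [Finset.card_erase_of_mem (Finset.mem_univ _), Finset.card_univ]
    _ = 1 + ZD.card * (Fintype.card F - 1) := by rw [Finset.sum_const, smul_eq_mul]
    _ ≤ 1 + k * (Fintype.card F - 1) := by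
        gcongr
        exact zero_dirs_card hk P hhom a b ha

lemma eval_zero_of_hom {k : ℕ} (hk : 1 ≤ k) (P : MvPolynomial (Fin 3) F)
    (hhom : P.IsHomogeneous k) : MvPolynomial.eval (0 : Fin 3 → F) P = 0 := by
  have := eval_smul_hom P hhom 0 (0 : Fin 3 → F)
  have h2 : (fun i => (0:F) * (0 : Fin 3 → F) i) = (0 : Fin 3 → F) := by funext i; simp
  rw [h2] at this
  rw [this, zero_pow (by omega), zero_mul]

lemma global_count {k : ℕ} (hk : 1 ≤ k) (P : MvPolynomial (Fin 3) F) (hhom : P.IsHomogeneous k)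
    (H : Finset (Fin 3 → F)) (hH : ∀ x, x ∈ H ↔ MvPolynomial.eval x P = 0)
    (a : Fin 3 → F) (ha : MvPolynomial.eval a P ≠ 0) :
    H.card ≤ k * Fintype.card F ^ 2 := by
  classical
  have ha0 : a ≠ 0 := by
    rintro rfl
    exact ha (eval_zero_of_hom hk P hhom)
  obtain ⟨i₀, hi₀⟩ : ∃ i, a i ≠ 0 := by
    by_contra h; push_neg at h; exact ha0 (funext h)
  set Z₀ : Finset (Fin 3 → F) := univ.filter (fun z => z i₀ = 0) with hZ₀
  have hZ₀card : Z₀.card ≤ Fintype.card F ^ 2 := by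
    have hinj : Set.InjOn (fun (z : Fin 3 → F) => fun (j : {j : Fin 3 // j ≠ i₀}) => z j) Z₀ := by
      intro z hz z' hz' hzz
      rw [hZ₀, Finset.coe_filter] at hz hz'
      funext j
      by_cases hj : j = i₀
      · subst hj; rw [hz.2, hz'.2]
      · exact congrFun hzz ⟨j, hj⟩
    have := Finset.card_le_card_of_injOn _ (fun x _ => Finset.mem_univ _) hinj
    apply this.trans
    rw [Finset.card_univ, Fintype.card_fun]
    have hcard2 : Fintype.card {j : Fin 3 // j ≠ i₀} = 2 := by
      rw [Fintype.card_subtype]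
      rw [Finset.filter_ne' univ i₀, Finset.card_erase_of_mem (Finset.mem_univ _)]
      simp
    rw [hcard2]
  set proj : (Fin 3 → F) → (Fin 3 → F) := fun x => fun i => x i - x i₀ / a i₀ * a i with hproj
  have hprojZ : ∀ x, proj x ∈ Z₀ := by
    intro x
    rw [hZ₀, Finset.mem_filter]
    refine ⟨Finset.mem_univ _, ?_⟩
    rw [hproj]
    field_simp
    ring
  have hsub : H ⊆ Z₀.biUnion (fun z => H.filter (fun x => proj x = z)) := by
    intro x hx
    exact Finset.mem_biUnion.mpr ⟨proj x, hprojZ x, Finset.mem_filter.mpr ⟨hx, rfl⟩⟩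
  have hfiber : ∀ z ∈ Z₀, (H.filter (fun x => proj x = z)).card ≤ k := by
    intro z _
    have hgne : linePoly P z a ≠ 0 := by
      intro h
      apply ha
      rw [← linePoly_coeff_top P hhom z a, h, Polynomial.coeff_zero]
    have : H.filter (fun x => proj x = z) ⊆
        ((linePoly P z a).roots.toFinset).image (fun s => fun i => z i + a i * s) := by
      intro x hx
      rw [Finset.mem_filter] at hx
      obtain ⟨hxH, hxz⟩ := hx
      refine Finset.mem_image.mpr ⟨x i₀ / a i₀, ?_, ?_⟩
      · rw [Multiset.mem_toFinset, Polynomial.mem_roots hgne, Polynomial.IsRoot, linePoly_eval]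
        have hfun : (fun i => z i + a i * (x i₀ / a i₀)) = x := by
          funext i
          rw [← hxz, hproj]
          ring
        rw [hfun]
        exact (hH x).mp hxH
      · funext i
        rw [← hxz, hproj]
        ring
    apply (Finset.card_le_card this).trans
    apply Finset.card_image_le.trans
    exact ((Multiset.toFinset_card_le _).trans (Polynomial.card_roots' _)).trans
      (linePoly_natDegree_le P hhom z a)
  calc H.card ≤ (Z₀.biUnion (fun z => H.filter (fun x => proj x = z))).card :=
        Finset.card_le_card hsub
    _ ≤ ∑ z ∈ Z₀, (H.filter (fun x => proj x = z)).card := Finset.card_biUnion_le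
    _ ≤ ∑ _z ∈ Z₀, k := Finset.sum_le_sum hfiber
    _ = Z₀.card * k := by rw [Finset.sum_const, smul_eq_mul]
    _ ≤ Fintype.card F ^ 2 * k := by gcongr
    _ = k * Fintype.card F ^ 2 := by ring

end AuxStmt3

/-- For a nonzero homogeneous polynomial `P` of degree `k ≥ 1` in three variables
over `𝔽_q`, with `H = {P = 0}` containing no plane through the origin and `|H| ≥ c·q²`,
for every `m ≠ 0` the inverse Fourier transform of the normalized surface measure satisfies
`|(dσ)^∨(m)| = | |H|⁻¹ Σ_{x∈H} χ(m·x) | ≤ k/(c(q − 1)) ≲ q^{−1}`. -/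
theorem stmt_3 {F : Type} [Field F] [Fintype F] [DecidableEq F]
    (χ : AddChar F ℂ) (hχ : χ ≠ 1)
    (k : ℕ) (hk : 1 ≤ k) (c : ℝ) (hc : 0 < c)
    (P : MvPolynomial (Fin 3) F) (hP : P ≠ 0) (hhom : P.IsHomogeneous k)
    (H : Finset (Fin 3 → F)) (hH : ∀ x, x ∈ H ↔ MvPolynomial.eval x P = 0)
    (hplane : ¬ ∃ m : Fin 3 → F, m ≠ 0 ∧
        (Finset.univ.filter (fun x : Fin 3 → F => ∑ i, m i * x i = 0)) ⊆ H)
    (hsize : c * (Fintype.card F : ℝ) ^ 2 ≤ H.card) :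
    ∀ m : Fin 3 → F, m ≠ 0 →
      ‖(H.card : ℂ)⁻¹ * ∑ x ∈ H, χ (∑ i, m i * x i)‖
        ≤ (k : ℝ) / (c * ((Fintype.card F : ℝ) - 1)) := by
  intro m hm
  classical
  set q := Fintype.card F with hq
  have hq2 : 2 ≤ q := Fintype.one_lt_card
  have hplane' : ∀ m' : Fin 3 → F, m' ≠ 0 →
      ¬ (Finset.univ.filter (fun x : Fin 3 → F => ∑ i, m' i * x i = 0)) ⊆ H := by
    intro m' hm' hsub
    exact hplane ⟨m', hm', hsub⟩
  obtain ⟨a, ha_mem, haH⟩ := Finset.not_subset.mp (hplane' m hm)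
  rw [Finset.mem_filter] at ha_mem
  have haP : MvPolynomial.eval a P ≠ 0 := fun h => haH ((hH a).mpr h)
  have ha0 : a ≠ 0 := by rintro rfl; exact haP (eval_zero_of_hom hk P hhom)
  obtain ⟨b, hb_mem, hbrep⟩ := exists_basis_pair m hm a ha0 ha_mem.2
  set N := (H.filter (fun x => ∑ i, m i * x i = 0)).card with hN
  have hNle : N ≤ 1 + k * (q - 1) := by
    apply plane_count hk P hhom a b haP
    intro x hx
    rw [Finset.mem_filter] at hx
    exact ⟨(hH x).mp hx.1, hbrep x hx.2⟩
  have hHle : H.card ≤ k * q ^ 2 := global_count hk P hhom H hH a haP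
  have hHpos : 0 < H.card := Finset.card_pos.mpr ⟨0, (hH 0).mpr (eval_zero_of_hom hk P hhom)⟩
  set S : ℂ := ∑ x ∈ H, χ (∑ i, m i * x i) with hS
  have claim1 : ∀ t : F, t ≠ 0 → ∑ x ∈ H, χ (t * ∑ i, m i * x i) = S := by
    intro t ht
    have hmem : ∀ (u : F), u ≠ 0 → ∀ x ∈ H, (fun i => u * x i) ∈ H := by
      intro u hu x hx
      rw [hH, eval_smul_hom P hhom, (hH x).mp hx, mul_zero]
    rw [hS]
    apply Finset.sum_nbij' (i := fun x => fun j => t * x j) (j := fun x => fun j => t⁻¹ * x j)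
    · intro x hx; exact hmem t ht x hx
    · intro x hx; exact hmem t⁻¹ (inv_ne_zero ht) x hx
    · intro x _; funext j; field_simp
    · intro x _; funext j; field_simp
    · intro x _
      congr 1
      rw [Finset.mul_sum]
      exact Finset.sum_congr rfl fun i _ => by ring
  have claim2 : ((q : ℂ) - 1) * S = (q : ℂ) * N - H.card := by
    have e1 : ∑ t ∈ (univ : Finset F).erase 0, ∑ x ∈ H, χ (t * ∑ i, m i * x i)
        = ((q : ℂ) - 1) * S := by
      rw [Finset.sum_congr rfl (fun t ht => claim1 t (Finset.mem_erase.mp ht).1),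
        Finset.sum_const, Finset.card_erase_of_mem (Finset.mem_univ _), Finset.card_univ,
        nsmul_eq_mul]
      congr 1
      rw [← hq, Nat.cast_sub (le_trans (by norm_num) hq2), Nat.cast_one]
    have e3 : ∀ x ∈ H, ∑ t ∈ (univ : Finset F).erase 0, χ (t * ∑ i, m i * x i)
        = if (∑ i, m i * x i) = 0 then ((q : ℂ) - 1) else -1 := by
      intro x _
      by_cases hcx : (∑ i, m i * x i) = 0
      · rw [if_pos hcx]
        simp only [hcx, mul_zero]
        rw [AddChar.map_zero_eq_one]
        rw [Finset.sum_const, Finset.card_erase_of_mem (Finset.mem_univ _), Finset.card_univ,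
          nsmul_eq_mul, mul_one]
        rw [← hq, Nat.cast_sub (le_trans (by norm_num) hq2), Nat.cast_one]
      · rw [if_neg hcx]
        have h1 : (χ.mulShift (∑ i, m i * x i)) ≠ 0 := by
          rw [AddChar.ne_zero_iff]
          apply AddChar.ne_one_iff.mp
          rw [Ne, AddChar.mulShift_unit_eq_one_iff χ (Ne.isUnit hcx)]
          exact hχ
        have h2 : ∑ t : F, χ ((∑ i, m i * x i) * t) = 0 := by
          have := AddChar.sum_eq_zero_iff_ne_zero.mpr h1
          simpa [AddChar.mulShift_apply] using this
        rw [Finset.sum_erase_eq_sub (Finset.mem_univ 0)]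
        have h3 : ∑ t : F, χ (t * ∑ i, m i * x i) = 0 := by
          rw [← h2]; exact Finset.sum_congr rfl fun t _ => by rw [mul_comm]
        rw [h3]
        simp
    have e2 : ((q : ℂ) - 1) * S
        = ∑ x ∈ H, (if (∑ i, m i * x i) = 0 then ((q : ℂ) - 1) else -1) := by
      rw [← e1, Finset.sum_comm]
      exact Finset.sum_congr rfl e3
    rw [e2, Finset.sum_ite, Finset.sum_const, Finset.sum_const, nsmul_eq_mul, nsmul_eq_mul]
    have hNM : N + (H.filter (fun x => ¬ (∑ i, m i * x i) = 0)).card = H.card := by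
      rw [hN]
      exact Finset.card_filter_add_card_filter_not _
    have hNMc : (N : ℂ) + ((H.filter (fun x => ¬ (∑ i, m i * x i) = 0)).card : ℂ)
        = (H.card : ℂ) := by exact_mod_cast congrArg (fun n : ℕ => (n : ℂ)) hNM
    linear_combination (-1 : ℂ) * hNMc
  have hq1 : ((q : ℂ) - 1) ≠ 0 := by
    rw [sub_ne_zero]
    intro h
    have h1 : q = 1 := by exact_mod_cast h
    rw [h1] at hq2
    exact absurd hq2 (by norm_num)
  have hHc : ((H.card : ℂ)) ≠ 0 := Nat.cast_ne_zero.mpr hHpos.ne'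
  have hz : (H.card : ℂ)⁻¹ * S
      = ((((q : ℝ) * N - H.card) / (H.card * ((q : ℝ) - 1)) : ℝ) : ℂ) := by
    push_cast
    rw [inv_mul_eq_div, div_eq_div_iff hHc (by exact mul_ne_zero hHc hq1)]
    linear_combination (H.card : ℂ) * claim2
  rw [hz, Complex.norm_real, Real.norm_eq_abs]
  have hQ1 : (0:ℝ) < (q : ℝ) - 1 := by
    have : (2:ℝ) ≤ (q:ℝ) := by exact_mod_cast hq2
    linarith
  have hHr : (0:ℝ) < (H.card : ℝ) := by exact_mod_cast hHpos
  have hH2 : (H.card : ℝ) ≤ (k : ℝ) * (q:ℝ)^2 := by exact_mod_cast hHle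
  have hN2 : (N : ℝ) ≤ 1 + (k:ℝ) * ((q:ℝ) - 1) := by
    have := hNle
    have h' : (N : ℝ) ≤ ((1 + k * (q - 1) : ℕ) : ℝ) := by exact_mod_cast this
    rw [Nat.cast_add, Nat.cast_mul, Nat.cast_sub (le_trans (by norm_num) hq2)] at h'
    simpa using h'
  have hk1 : (1:ℝ) ≤ (k:ℝ) := by exact_mod_cast hk
  have hQ2 : (2:ℝ) ≤ (q:ℝ) := by exact_mod_cast hq2
  have hck : c ≤ (k:ℝ) := by nlinarith [hsize, hH2]
  have hkey : |(q:ℝ) * N - H.card| ≤ ((k:ℝ)/c) * H.card := by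
    rw [abs_le]
    have h1 : (1:ℝ) ≤ (k:ℝ) / c := (one_le_div hc).mpr hck
    have hNn : (0:ℝ) ≤ (N:ℝ) := Nat.cast_nonneg _
    constructor
    · nlinarith [mul_nonneg (by linarith : (0:ℝ) ≤ (q:ℝ)) hNn]
    · have hub : (q:ℝ) * (N:ℝ) ≤ (k:ℝ) * (q:ℝ)^2 := by nlinarith
      have hub2 : (k:ℝ) * (q:ℝ)^2 ≤ ((k:ℝ)/c) * H.card := by
        rw [div_mul_eq_mul_div, le_div_iff₀ hc]
        nlinarith [hsize]
      nlinarith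
  calc |((q : ℝ) * N - H.card) / (H.card * ((q : ℝ) - 1))|
      = |(q:ℝ) * N - H.card| / (H.card * ((q:ℝ) - 1)) := by
        rw [abs_div, abs_of_pos (mul_pos hHr hQ1)]
    _ ≤ (((k:ℝ)/c) * H.card) / (H.card * ((q:ℝ) - 1)) := by
        gcongr
    _ = (k : ℝ) / (c * ((q:ℝ) - 1)) := by
        field_simp
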